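/- For all nonnegative integers z₁ ≥ z₂, z₃ and all real t₀ > 0, t₁ > 0: if M(z₁,z₂,z₃) > 0, then η(z₁,z₂,z₃;t₀,t₁) ≥ η(2z₃,z₃,z₃;t₀,t₁); equivalently, 4(z₁²+z₂²−z₁(z₂−3))/3 ≥ 4z₃(z₃+2). Moreover equality is attained: M(2z₃,z₃,z₃) = 1 and the horizontal part of the eigenvalue, η(2z₃,z₃,z₃;t₀,t₁) − 4z₃(z₃+1)/t₁, equals 4z₃/t₀. -/
import Mathlib


/-- The partition function `℘(a₁,a₂)`: the number of triples `(m₁,m₂,m₃) ∈ ℕ₀³` with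
`a₁ = 3(m₁+m₂)` and `a₂ = m₃ − m₁ − 2m₂`. -/
noncomputable def wp (a₁ a₂ : ℤ) : ℕ :=
  Set.ncard {m : ℕ × ℕ × ℕ |
    a₁ = 3 * ((m.1 : ℤ) + (m.2.1 : ℤ)) ∧ a₂ = (m.2.2 : ℤ) - (m.1 : ℤ) - 2 * (m.2.1 : ℤ)}

/-- The branching multiplicity `m(z₁,z₂,z₃)` of the trivial `U•(2)`-representation in the
irreducible `SU(3)×SO(3)`-representation of highest weight `z₁λ₁+z₂λ₂+z₃μ₁`, expressed
as a seven-term alternating sum of partition function values. -/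
noncomputable def branchM (z₁ z₂ z₃ : ℕ) : ℤ :=
  (wp ((z₁ : ℤ) + z₂) (-(z₃ : ℤ) - z₁ - 2) : ℤ)
  + (wp ((z₁ : ℤ) + z₂) ((z₃ : ℤ) - z₂) : ℤ)
  - (wp ((z₁ : ℤ) + z₂) (-(z₃ : ℤ) - z₂ - 1) : ℤ)
  - (wp ((z₁ : ℤ) + z₂) ((z₃ : ℤ) - z₁ - 1) : ℤ)
  + (wp ((z₁ : ℤ) - 2 * z₂ - 3) ((z₂ : ℤ) + 1 - z₃) : ℤ)
  + (wp ((z₁ : ℤ) - 2 * z₂ - 3) ((z₂ : ℤ) - z₁ + z₃) : ℤ)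
  - (wp ((z₁ : ℤ) - 2 * z₂ - 3) ((z₂ : ℤ) + 2 + z₃) : ℤ)

/-- The Laplace eigenvalue `η(z₁,z₂,z₃;t₀,t₁)` of the metric `g_{t₀,t₁}` on the
Aloff–Wallach manifold `W^{1,1}` associated with the representation `ϱ(z₁,z₂,z₃)`. -/
noncomputable def eta (z₁ z₂ z₃ : ℕ) (t₀ t₁ : ℝ) : ℝ :=
  (4 * ((z₁ : ℝ) ^ 2 + (z₂ : ℝ) ^ 2 - (z₁ : ℝ) * ((z₂ : ℝ) - 3)) / 3
      - 4 * (z₃ : ℝ) * ((z₃ : ℝ) + 1)) / t₀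
    + 4 * (z₃ : ℝ) * ((z₃ : ℝ) + 1) / t₁

lemma wp_eq (a₁ a₂ : ℤ) :
    (wp a₁ a₂ : ℤ) =
      if 0 ≤ a₁ ∧ 3 ∣ a₁ then max 0 (min (a₁ / 3 + 1) (a₂ + 2 * (a₁ / 3) + 1)) else 0 := by
  split_ifs with h
  · obtain ⟨h0, c, hc⟩ := h
    have hc0 : 0 ≤ c := by omega
    obtain ⟨k, rfl⟩ := Int.eq_ofNat_of_zero_le hc0
    have hset : {m : ℕ × ℕ × ℕ |
        a₁ = 3 * ((m.1 : ℤ) + (m.2.1 : ℤ)) ∧ a₂ = (m.2.2 : ℤ) - (m.1 : ℤ) - 2 * (m.2.1 : ℤ)}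
        = ↑((Finset.Icc ((-a₂ - k).toNat) k).image
            (fun m₂ => (k - m₂, m₂, (a₂ + k + m₂).toNat))) := by
      ext ⟨m₁, m₂, m₃⟩
      simp only [Set.mem_setOf_eq, Finset.coe_image, Set.mem_image, Finset.mem_coe,
        Finset.mem_Icc, Prod.mk.injEq]
      constructor
      · rintro ⟨h1, h2⟩
        exact ⟨m₂, by omega, by omega, rfl, by omega⟩
      · rintro ⟨x, ⟨hx1, hx2⟩, h1, rfl, h3⟩
        constructor <;> omega
    rw [wp, hset, Set.ncard_coe_finset,
      Finset.card_image_of_injective _ (fun x y hxy => by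
        exact congrArg (fun p => p.2.1) hxy),
      Nat.card_Icc]
    omega
  · have hset : {m : ℕ × ℕ × ℕ |
        a₁ = 3 * ((m.1 : ℤ) + (m.2.1 : ℤ)) ∧ a₂ = (m.2.2 : ℤ) - (m.1 : ℤ) - 2 * (m.2.1 : ℤ)}
        = ∅ := by
      ext ⟨m₁, m₂, m₃⟩
      simp only [Set.mem_setOf_eq, Set.mem_empty_iff_false, iff_false, not_and]
      intro h1
      exfalso
      exact h ⟨by omega, ⟨(m₁ : ℤ) + m₂, h1⟩⟩
    rw [wp, hset, Set.ncard_empty]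
    rfl

lemma branchM_pos_le (z₁ z₂ z₃ : ℕ) (hz : z₂ ≤ z₁) (h : 0 < branchM z₁ z₂ z₃) :
    2 * z₃ ≤ z₁ := by
  unfold branchM at h
  simp only [wp_eq] at h
  split_ifs at h <;> omega

lemma branchM_eq (z₃ : ℕ) : branchM (2 * z₃) z₃ z₃ = 1 := by
  unfold branchM
  simp only [wp_eq]
  split_ifs <;> push_cast <;> omega

lemma eta_min (z₃ : ℕ) (t₀ t₁ : ℝ) (ht₀ : t₀ ≠ 0) :
    eta (2 * z₃) z₃ z₃ t₀ t₁ = 4 * (z₃ : ℝ) / t₀ + 4 * (z₃ : ℝ) * ((z₃ : ℝ) + 1) / t₁ := by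
  unfold eta
  push_cast
  congr 1
  field_simp
  ring

/-- **First horizontal eigenvalue for a fixed fibre representation.**
For nonnegative integers `z₁ ≥ z₂`, `z₃` and reals `t₀, t₁ > 0`: if `m(z₁,z₂,z₃) > 0`
then `η(z₁,z₂,z₃;t₀,t₁) ≥ η(2z₃,z₃,z₃;t₀,t₁)`, equivalently
`4(z₁²+z₂²−z₁(z₂−3))/3 ≥ 4z₃(z₃+2)`. Moreover equality is attained:
`m(2z₃,z₃,z₃) = 1`, and the horizontal part
`η(2z₃,z₃,z₃;t₀,t₁) − 4z₃(z₃+1)/t₁` equals `4z₃/t₀`. -/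
theorem eta_ge_eta_of_branchM_pos (z₁ z₂ z₃ : ℕ) (hz : z₂ ≤ z₁)
    (t₀ t₁ : ℝ) (ht₀ : 0 < t₀) (ht₁ : 0 < t₁) :
    (0 < branchM z₁ z₂ z₃ →
      eta z₁ z₂ z₃ t₀ t₁ ≥ eta (2 * z₃) z₃ z₃ t₀ t₁ ∧
      4 * ((z₁ : ℝ) ^ 2 + (z₂ : ℝ) ^ 2 - (z₁ : ℝ) * ((z₂ : ℝ) - 3)) / 3
        ≥ 4 * (z₃ : ℝ) * ((z₃ : ℝ) + 2)) ∧
    branchM (2 * z₃) z₃ z₃ = 1 ∧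
    eta (2 * z₃) z₃ z₃ t₀ t₁ - 4 * (z₃ : ℝ) * ((z₃ : ℝ) + 1) / t₁ = 4 * (z₃ : ℝ) / t₀ := by
  refine ⟨?_, branchM_eq z₃, by rw [eta_min z₃ t₀ t₁ ht₀.ne']; ring⟩
  intro hpos
  have h2 : 2 * z₃ ≤ z₁ := branchM_pos_le z₁ z₂ z₃ hz hpos
  have h2' : 2 * (z₃ : ℝ) ≤ (z₁ : ℝ) := by exact_mod_cast h2
  have hq : 4 * ((z₁ : ℝ) ^ 2 + (z₂ : ℝ) ^ 2 - (z₁ : ℝ) * ((z₂ : ℝ) - 3)) / 3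
      ≥ 4 * (z₃ : ℝ) * ((z₃ : ℝ) + 2) := by
    nlinarith [sq_nonneg ((z₁ : ℝ) - 2 * (z₂ : ℝ)),
      mul_nonneg (sub_nonneg.2 h2') (by positivity : (0:ℝ) ≤ (z₁ : ℝ) + 2 * (z₃ : ℝ))]
  refine ⟨?_, hq⟩
  rw [ge_iff_le, eta_min z₃ t₀ t₁ ht₀.ne']
  unfold eta
  gcongr
  nlinarith [hq]
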